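/- Let e₀, e₁ be real numbers with e₀ > −1, e₁ > −1 and e₀ + e₁ ∉ ℤ. Then a polynomial P ∈ ℂ[z] lies in the image T₁(ℂ[z]) if and only if μ(P) = ∫₀¹ P(x)·x^{e₀}·(1−x)^{e₁} dx = 0. Moreover, writing P = T₁(R) + Λ with R ∈ ℂ[z] and Λ ∈ ℂ (such a decomposition exists and is unique), one has μ(P) = Λ·μ(1). -/

import Mathlib

open Polynomial

/-- The operator `T₁(R) = z(1−z)·R′ + (e₀+1 − (e₀+e₁+2)z)·R` (the case `J = 1` of `T`),
acting on complex polynomials, with real parameters `e₀, e₁`. -/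
noncomputable def T1 (e₀ e₁ : ℝ) (R : ℂ[X]) : ℂ[X] :=
  X * (1 - X) * derivative R +
    (C ((e₀ : ℂ) + 1) - C ((e₀ : ℂ) + e₁ + 2) * X) * R

/-- The linear form `μ(P) = ∫₀¹ P(x)·x^{e₀}·(1−x)^{e₁} dx` on complex polynomials. -/
noncomputable def mu (e₀ e₁ : ℝ) (P : ℂ[X]) : ℂ :=
  ∫ x in (0:ℝ)..1, P.eval (x : ℂ) * ((x ^ e₀ * (1 - x) ^ e₁ : ℝ) : ℂ)

open MeasureTheory

-- algebraic lemmas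
lemma T1_add (e₀ e₁ : ℝ) (R S : ℂ[X]) : T1 e₀ e₁ (R + S) = T1 e₀ e₁ R + T1 e₀ e₁ S := by
  simp only [T1, derivative_add]; ring

lemma T1_sub (e₀ e₁ : ℝ) (R S : ℂ[X]) : T1 e₀ e₁ (R - S) = T1 e₀ e₁ R - T1 e₀ e₁ S := by
  simp only [T1, derivative_sub]; ring

lemma T1_zero (e₀ e₁ : ℝ) : T1 e₀ e₁ 0 = 0 := by simp [T1]

lemma T1_C_mul (e₀ e₁ : ℝ) (c : ℂ) (R : ℂ[X]) : T1 e₀ e₁ (C c * R) = C c * T1 e₀ e₁ R := by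
  simp only [T1, derivative_C_mul]; ring

lemma T1_pow (e₀ e₁ : ℝ) (n : ℕ) :
    T1 e₀ e₁ (X ^ n : ℂ[X]) =
      C ((e₀ : ℂ) + n + 1) * X ^ n - C ((e₀ : ℂ) + e₁ + n + 2) * X ^ (n + 1) := by
  cases n with
  | zero => simp only [T1, pow_zero, derivative_one, map_add, map_one, Nat.cast_zero,
      map_zero]; ring
  | succ m =>
    simp only [T1, derivative_X_pow, map_add, map_one, map_natCast, Nat.cast_add, Nat.cast_one,
      Nat.add_sub_cancel]
    ring

lemma s_ne (e₀ e₁ : ℝ) (hsum : ∀ m : ℤ, (m : ℝ) ≠ e₀ + e₁) (n : ℕ) :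
    ((e₀ : ℂ) + e₁ + n + 2) ≠ 0 := by
  intro h
  have : ((e₀ + e₁ + n + 2 : ℝ) : ℂ) = 0 := by push_cast; linear_combination h
  have h' : e₀ + e₁ + n + 2 = 0 := by exact_mod_cast this
  exact hsum (-(n + 2)) (by push_cast; linarith)

lemma T1_coeff_top (e₀ e₁ : ℝ) (D : ℂ[X]) :
    (T1 e₀ e₁ D).coeff (D.natDegree + 1) =
      -((e₀ : ℂ) + e₁ + D.natDegree + 2) * D.leadingCoeff := by
  have expand : T1 e₀ e₁ D = X * derivative D - X * (X * derivative D)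
      + C ((e₀ : ℂ) + 1) * D - C ((e₀ : ℂ) + e₁ + 2) * (X * D) := by
    simp only [T1]; ring
  rw [expand]
  rcases hnd : D.natDegree with _ | m
  · have hD : D = C (D.coeff 0) := Polynomial.eq_C_of_natDegree_eq_zero hnd
    rw [← expand, leadingCoeff, hnd]
    conv_lhs => rw [hD, ← mul_one (C (D.coeff 0)), ← pow_zero (X : ℂ[X]), T1_C_mul, T1_pow]
    simp [coeff_C_mul, coeff_C, coeff_X_pow, coeff_one]
    ring
  · simp only [coeff_add, coeff_sub, coeff_X_mul, coeff_C_mul, coeff_derivative]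
    have h1 : D.coeff (m + 1 + 1) = 0 :=
      coeff_eq_zero_of_natDegree_lt (by omega)
    have h2 : D.coeff (m + 1) = D.leadingCoeff := by
      rw [leadingCoeff, hnd]
    rw [h1, h2]
    push_cast
    ring

lemma T1_ne_C (e₀ e₁ : ℝ) (hsum : ∀ m : ℤ, (m : ℝ) ≠ e₀ + e₁)
    {D : ℂ[X]} (hD : D ≠ 0) (k : ℂ) : T1 e₀ e₁ D ≠ C k := by
  intro h
  have h1 : (T1 e₀ e₁ D).coeff (D.natDegree + 1) = 0 := by
    rw [h, coeff_C, if_neg (Nat.succ_ne_zero _)]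
  rw [T1_coeff_top] at h1
  rcases mul_eq_zero.mp h1 with h2 | h2
  · exact s_ne e₀ e₁ hsum D.natDegree (by linear_combination -h2)
  · exact leadingCoeff_ne_zero.mpr hD h2

lemma exists_decomp (e₀ e₁ : ℝ) (hsum : ∀ m : ℤ, (m : ℝ) ≠ e₀ + e₁) (P : ℂ[X]) :
    ∃ R Λ, P = T1 e₀ e₁ R + C Λ := by
  suffices H : ∀ n (P : ℂ[X]), P.natDegree ≤ n → ∃ R Λ, P = T1 e₀ e₁ R + C Λ from
    H P.natDegree P le_rfl
  intro n
  induction n with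
  | zero =>
    intro P hP
    exact ⟨0, P.coeff 0, by rw [T1_zero, zero_add]; exact P.eq_C_of_natDegree_le_zero hP⟩
  | succ n ih =>
    intro P hP
    set s : ℂ := (e₀ : ℂ) + e₁ + n + 2 with hs
    have hs0 : s ≠ 0 := s_ne e₀ e₁ hsum n
    set R₀ : ℂ[X] := C (-(P.coeff (n + 1) / s)) * X ^ n with hR₀
    have hT : T1 e₀ e₁ R₀ = C (-(P.coeff (n + 1) / s)) *
        (C ((e₀ : ℂ) + n + 1) * X ^ n - C s * X ^ (n + 1)) := by
      rw [hR₀, T1_C_mul, T1_pow]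
    set Q : ℂ[X] := P - T1 e₀ e₁ R₀ with hQ
    have hQdeg : Q.natDegree ≤ n := by
      rw [natDegree_le_iff_coeff_eq_zero]
      intro N hN
      rcases eq_or_lt_of_le (Nat.succ_le_of_lt hN) with h | h
      · -- N = n + 1
        rw [hQ, coeff_sub, hT]
        simp only [coeff_C_mul, coeff_sub, coeff_X_pow, ← h]
        simp only [if_true, mul_zero, zero_sub, mul_one, Nat.succ_eq_add_one]
        field_simp
        simp
      · -- N > n + 1
        rw [hQ, coeff_sub, hT]
        have h1 : P.coeff N = 0 := coeff_eq_zero_of_natDegree_lt (by omega)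
        simp only [coeff_C_mul, coeff_sub, coeff_X_pow, h1]
        rw [if_neg (by omega), if_neg (by omega)]
        ring
    obtain ⟨R', Λ, hR'⟩ := ih Q hQdeg
    refine ⟨R₀ + R', Λ, ?_⟩
    rw [T1_add]
    have : P = Q + T1 e₀ e₁ R₀ := by rw [hQ]; ring
    rw [this, hR']; ring

open Complex in
lemma weight_eq (e₀ e₁ : ℝ) {x : ℝ} (hx : x ∈ Set.Ioc (0:ℝ) 1) :
    ((x ^ e₀ * (1 - x) ^ e₁ : ℝ) : ℂ) =
      (x : ℂ) ^ ((e₀ : ℂ) + 1 - 1) * (1 - (x : ℂ)) ^ ((e₁ : ℂ) + 1 - 1) := by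
  rw [Complex.ofReal_mul, Complex.ofReal_cpow hx.1.le, Complex.ofReal_cpow (by linarith [hx.2])]
  push_cast
  ring_nf

lemma weight_integrable (e₀ e₁ : ℝ) (h₀ : -1 < e₀) (h₁ : -1 < e₁) :
    IntervalIntegrable (fun x : ℝ => ((x ^ e₀ * (1 - x) ^ e₁ : ℝ) : ℂ)) volume 0 1 := by
  have hb := Complex.betaIntegral_convergent (u := (e₀ : ℂ) + 1) (v := (e₁ : ℂ) + 1)
    (by simp; linarith) (by simp; linarith)
  rw [intervalIntegrable_iff] at hb ⊢
  refine hb.congr ?_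
  rw [Set.uIoc_of_le (by norm_num : (0:ℝ) ≤ 1)]
  filter_upwards [ae_restrict_mem measurableSet_Ioc] with x hx
  exact (weight_eq e₀ e₁ hx).symm

lemma mu_integrable (e₀ e₁ : ℝ) (h₀ : -1 < e₀) (h₁ : -1 < e₁) (P : ℂ[X]) :
    IntervalIntegrable (fun x : ℝ => P.eval (x : ℂ) * ((x ^ e₀ * (1 - x) ^ e₁ : ℝ) : ℂ))
      volume 0 1 :=
  (weight_integrable e₀ e₁ h₀ h₁).continuousOn_mul
    ((P.continuous_aeval.comp Complex.continuous_ofReal).continuousOn)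

lemma mu_add (e₀ e₁ : ℝ) (h₀ : -1 < e₀) (h₁ : -1 < e₁) (P Q : ℂ[X]) :
    mu e₀ e₁ (P + Q) = mu e₀ e₁ P + mu e₀ e₁ Q := by
  unfold mu
  simp only [eval_add, add_mul]
  exact intervalIntegral.integral_add (mu_integrable e₀ e₁ h₀ h₁ P) (mu_integrable e₀ e₁ h₀ h₁ Q)

lemma mu_C_mul (e₀ e₁ : ℝ) (c : ℂ) (P : ℂ[X]) :
    mu e₀ e₁ (C c * P) = c * mu e₀ e₁ P := by
  unfold mu
  simp only [eval_mul, eval_C, mul_assoc]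
  exact intervalIntegral.integral_const_mul c _

lemma mu_pow (e₀ e₁ : ℝ) (n : ℕ) :
    mu e₀ e₁ (X ^ n) = Complex.betaIntegral ((e₀ : ℂ) + n + 1) ((e₁ : ℂ) + 1) := by
  unfold mu Complex.betaIntegral
  refine intervalIntegral.integral_congr_ae ?_
  filter_upwards with x hx
  rw [Set.uIoc_of_le (by norm_num : (0:ℝ) ≤ 1)] at hx
  rw [weight_eq e₀ e₁ hx]
  simp only [eval_pow, eval_X]
  have hx0 : (x : ℂ) ≠ 0 := by
    simpa using ne_of_gt hx.1
  have he : (↑n : ℂ) + ((e₀ : ℂ) + 1 - 1) = (e₀ : ℂ) + ↑n + 1 - 1 := by ring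
  rw [← Complex.cpow_natCast (x : ℂ) n, ← mul_assoc, ← Complex.cpow_add _ _ hx0, he]

lemma beta_rec (a b : ℂ) (ha : 0 < a.re) (hb : 0 < b.re) :
    a * Complex.betaIntegral a b = (a + b) * Complex.betaIntegral (a + 1) b := by
  have hab : 0 < (a + b).re := by simp [Complex.add_re]; positivity
  have h1 := Complex.Gamma_mul_Gamma_eq_betaIntegral ha hb
  have h2 := Complex.Gamma_mul_Gamma_eq_betaIntegral (s := a + 1) (t := b)
    (by rw [Complex.add_re, Complex.one_re]; linarith) hb
  have hGa : Complex.Gamma (a + 1) = a * Complex.Gamma a :=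
    Complex.Gamma_add_one a (by intro h; rw [h] at ha; simp at ha)
  have hGab : Complex.Gamma (a + 1 + b) = (a + b) * Complex.Gamma (a + b) := by
    rw [show a + 1 + b = (a + b) + 1 by ring]
    exact Complex.Gamma_add_one _ (by intro h; rw [h] at hab; simp at hab)
  have hne : Complex.Gamma (a + b) ≠ 0 := Complex.Gamma_ne_zero_of_re_pos hab
  apply mul_left_cancel₀ hne
  rw [hGa, hGab] at h2
  linear_combination h2 - a * h1

lemma mu_T1_pow (e₀ e₁ : ℝ) (h₀ : -1 < e₀) (h₁ : -1 < e₁) (n : ℕ) :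
    mu e₀ e₁ (T1 e₀ e₁ (X ^ n)) = 0 := by
  rw [T1_pow]
  have hsub : (C ((e₀:ℂ) + n + 1) * X ^ n - C ((e₀:ℂ) + e₁ + n + 2) * X ^ (n+1) : ℂ[X])
      = C ((e₀:ℂ) + n + 1) * X ^ n + C (-((e₀:ℂ) + e₁ + n + 2)) * X ^ (n+1) := by
    rw [map_neg]; ring
  rw [hsub, mu_add e₀ e₁ h₀ h₁, mu_C_mul, mu_C_mul, mu_pow, mu_pow]
  have ha : (0:ℝ) < ((e₀:ℂ) + n + 1).re := by
    simp [Complex.add_re]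
    have hn : (0:ℝ) ≤ (n:ℝ) := Nat.cast_nonneg n
    linarith
  have hb : (0:ℝ) < ((e₁:ℂ) + 1).re := by
    simp [Complex.add_re]; linarith
  have := beta_rec ((e₀:ℂ) + n + 1) ((e₁:ℂ) + 1) ha hb
  have hcast : ((e₀:ℂ) + (n+1:ℕ) + 1) = ((e₀:ℂ) + n + 1) + 1 := by push_cast; ring
  rw [hcast]
  have hcoef : ((e₀:ℂ) + e₁ + n + 2) = ((e₀:ℂ) + n + 1) + ((e₁:ℂ) + 1) := by ring
  rw [hcoef]
  linear_combination this

lemma mu_T1 (e₀ e₁ : ℝ) (h₀ : -1 < e₀) (h₁ : -1 < e₁) (R : ℂ[X]) :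
    mu e₀ e₁ (T1 e₀ e₁ R) = 0 := by
  induction R using Polynomial.induction_on' with
  | add p q hp hq => rw [T1_add, mu_add e₀ e₁ h₀ h₁, hp, hq, add_zero]
  | monomial n c =>
    rw [← C_mul_X_pow_eq_monomial, T1_C_mul, mu_C_mul, mu_T1_pow e₀ e₁ h₀ h₁, mul_zero]

lemma mu_one_ne (e₀ e₁ : ℝ) (h₀ : -1 < e₀) (h₁ : -1 < e₁) : mu e₀ e₁ (1 : ℂ[X]) ≠ 0 := by
  have h := mu_pow e₀ e₁ 0
  rw [pow_zero] at h
  rw [h]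
  have ha : (0:ℝ) < ((e₀:ℂ) + (0:ℕ) + 1).re := by simp; linarith
  have hb : (0:ℝ) < ((e₁:ℂ) + 1).re := by simp; linarith
  have hG := Complex.Gamma_mul_Gamma_eq_betaIntegral ha hb
  intro hz
  rw [hz, mul_zero] at hG
  rcases mul_eq_zero.mp hG with h' | h'
  · exact Complex.Gamma_ne_zero_of_re_pos ha h'
  · exact Complex.Gamma_ne_zero_of_re_pos hb h'

lemma mu_C (e₀ e₁ : ℝ) (Λ : ℂ) : mu e₀ e₁ (C Λ) = Λ * mu e₀ e₁ 1 := by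
  rw [← mu_C_mul, mul_one]

lemma decomp_unique (e₀ e₁ : ℝ) (hsum : ∀ m : ℤ, (m : ℝ) ≠ e₀ + e₁)
    {R S : ℂ[X]} {Λ Λ' : ℂ} (h : T1 e₀ e₁ R + C Λ = T1 e₀ e₁ S + C Λ') :
    R = S ∧ Λ = Λ' := by
  by_cases hRS : R = S
  · subst hRS
    refine ⟨rfl, C_injective ?_⟩
    exact add_left_cancel h
  · exfalso
    have hD : R - S ≠ 0 := sub_ne_zero_of_ne hRS
    have : T1 e₀ e₁ (R - S) = C (Λ' - Λ) := by
      rw [T1_sub, map_sub]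
      linear_combination h
    exact T1_ne_C e₀ e₁ hsum hD _ this

/-- For `e₀, e₁ > −1` with `e₀ + e₁ ∉ ℤ`: a polynomial `P` lies in the image of `T₁`
iff `μ(P) = 0`; moreover `P` decomposes uniquely as `P = T₁(R) + Λ` with `Λ ∈ ℂ`
constant, and for any such decomposition `μ(P) = Λ·μ(1)`. -/
theorem stmt_11 (e₀ e₁ : ℝ) (h₀ : -1 < e₀) (h₁ : -1 < e₁)
    (hsum : ∀ m : ℤ, (m : ℝ) ≠ e₀ + e₁) (P : ℂ[X]) :
    ((∃ R : ℂ[X], P = T1 e₀ e₁ R) ↔ mu e₀ e₁ P = 0) ∧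
    (∃! RΛ : ℂ[X] × ℂ, P = T1 e₀ e₁ RΛ.1 + C RΛ.2) ∧
    (∀ (R : ℂ[X]) (Λ : ℂ), P = T1 e₀ e₁ R + C Λ →
      mu e₀ e₁ P = Λ * mu e₀ e₁ 1) := by
  obtain ⟨R₀, Λ₀, hP₀⟩ := exists_decomp e₀ e₁ hsum P
  have part3 : ∀ (R : ℂ[X]) (Λ : ℂ), P = T1 e₀ e₁ R + C Λ →
      mu e₀ e₁ P = Λ * mu e₀ e₁ 1 := by
    intro R Λ h
    rw [h, mu_add e₀ e₁ h₀ h₁, mu_T1 e₀ e₁ h₀ h₁, zero_add, mu_C]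
  refine ⟨⟨?_, ?_⟩, ⟨(R₀, Λ₀), hP₀, ?_⟩, part3⟩
  · rintro ⟨R, rfl⟩
    exact mu_T1 e₀ e₁ h₀ h₁ R
  · intro hmu
    have h3 := part3 R₀ Λ₀ hP₀
    rw [hmu] at h3
    have hΛ : Λ₀ = 0 := by
      rcases mul_eq_zero.mp h3.symm with h' | h'
      · exact h'
      · exact absurd h' (mu_one_ne e₀ e₁ h₀ h₁)
    exact ⟨R₀, by rw [hP₀, hΛ, map_zero, add_zero]⟩
  · rintro ⟨R, Λ⟩ h
    obtain ⟨h1, h2⟩ := decomp_unique e₀ e₁ hsum (h.symm.trans hP₀)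
    exact Prod.ext h1 h2
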